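/- Let A be a finite set, u : A → [0,∞), γ ∈ (0,1]. For an infinite history (a_t), define the block average payoff W_γ(a, t₁, t₂) = (1/(t₂−t₁))·Σ_{s=t₁+1}^{t₂} (1 − γ·φ(a_s | a^{s−1}))·u(a_s), the within-block frequency p(a) = (1/(t₂−t₁))·Σ_{s=t₁+1}^{t₂} 1[a_s = a], and the approximation Ũ_γ(a, t₁, t₂) = Σ_{a∈A} p(a)·(1 − γ·φ(a | a^{t₁}))·u(a). Then |W_γ(a, t₁, t₂) − Ũ_γ(a, t₁, t₂)| ≤ 2·((t₂−t₁)/t₁)·γ·Σ_{a∈A} u(a) for all 1 ≤ t₁ < t₂. -/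

import Mathlib

open Finset

/-- Empirical frequency of action `b` in the first `t` periods of history `a`. -/
noncomputable def freq {A : Type*} [DecidableEq A] (a : ℕ → A) (b : A) (t : ℕ) : ℝ :=
  if t = 0 then 0 else (∑ s ∈ Finset.Icc 1 t, if a s = b then (1 : ℝ) else 0) / t

/-- Average fatigued payoff within the block from `t₁+1` to `t₂`. -/
noncomputable def blockW {A : Type*} [DecidableEq A] (u : A → ℝ) (γ : ℝ) (a : ℕ → A)
    (t₁ t₂ : ℕ) : ℝ :=
  (∑ s ∈ Finset.Icc (t₁ + 1) t₂, (1 - γ * freq a (a s) (s - 1)) * u (a s)) / ((t₂ : ℝ) - t₁)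

/-- Within-block frequency of action `b` in the block from `t₁+1` to `t₂`. -/
noncomputable def blockP {A : Type*} [DecidableEq A] (a : ℕ → A) (b : A) (t₁ t₂ : ℕ) : ℝ :=
  (∑ s ∈ Finset.Icc (t₁ + 1) t₂, if a s = b then (1 : ℝ) else 0) / ((t₂ : ℝ) - t₁)

/-- Approximation of the block average payoff using the frequencies at time `t₁`. -/
noncomputable def blockU {A : Type*} [Fintype A] [DecidableEq A] (u : A → ℝ) (γ : ℝ)
    (a : ℕ → A) (t₁ t₂ : ℕ) : ℝ :=
  ∑ b : A, blockP a b t₁ t₂ * (1 - γ * freq a b t₁) * u b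

lemma aux_real {S1 d t1 tt : ℝ} (h1 : 1 ≤ t1) (h2 : t1 ≤ tt) (hS0 : 0 ≤ S1) (hS1 : S1 ≤ t1)
    (hd0 : 0 ≤ d) (hd1 : d ≤ tt - t1) :
    |S1 / t1 - (S1 + d) / tt| ≤ 2 * (tt - t1) / t1 := by
  have ht1 : (0:ℝ) < t1 := by linarith
  have htt : (0:ℝ) < tt := by linarith
  rw [abs_sub_le_iff]
  constructor
  · rw [div_sub_div _ _ ht1.ne' htt.ne', div_le_div_iff₀ (by positivity) ht1]
    nlinarith [mul_nonneg hd0 ht1.le, mul_nonneg (sub_nonneg.2 h2) ht1.le,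
      mul_nonneg (sub_nonneg.2 hS1) (sub_nonneg.2 h2)]
  · rw [div_sub_div _ _ htt.ne' ht1.ne', div_le_div_iff₀ (by positivity) ht1]
    nlinarith [mul_nonneg hS0 (sub_nonneg.2 h2), mul_nonneg (sub_nonneg.2 h2) ht1.le,
      mul_nonneg (sub_nonneg.2 (hd1.trans (le_refl _))) ht1.le,
      mul_nonneg hd0 (sub_nonneg.2 h2)]

lemma freq_diff_abs {A : Type*} [DecidableEq A] (a : ℕ → A) (b : A) {t₁ t : ℕ}
    (h1 : 1 ≤ t₁) (h2 : t₁ ≤ t) :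
    |freq a b t₁ - freq a b t| ≤ 2 * ((t : ℝ) - t₁) / t₁ := by
  have ht1 : t₁ ≠ 0 := by omega
  have ht : t ≠ 0 := by omega
  rw [freq, freq, if_neg ht1, if_neg ht]
  have hsplit : (∑ s ∈ Finset.Icc 1 t, if a s = b then (1:ℝ) else 0)
      = (∑ s ∈ Finset.Icc 1 t₁, if a s = b then (1:ℝ) else 0)
        + ∑ s ∈ Finset.Icc (t₁+1) t, if a s = b then (1:ℝ) else 0 := by
    rw [show Finset.Icc 1 t = Finset.Ioc 0 t by rw [← Finset.Icc_add_one_left_eq_Ioc]; rfl,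
        show Finset.Icc 1 t₁ = Finset.Ioc 0 t₁ by rw [← Finset.Icc_add_one_left_eq_Ioc]; rfl,
        show Finset.Icc (t₁+1) t = Finset.Ioc t₁ t by rw [← Finset.Icc_add_one_left_eq_Ioc]]
    exact (Finset.sum_Ioc_consecutive _ (Nat.zero_le _) h2).symm
  rw [hsplit]
  set S1 := ∑ s ∈ Finset.Icc 1 t₁, if a s = b then (1:ℝ) else 0 with hS1def
  set d := ∑ s ∈ Finset.Icc (t₁+1) t, if a s = b then (1:ℝ) else 0 with hddef
  have hS0 : 0 ≤ S1 := Finset.sum_nonneg fun i _ => by positivity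
  have hS1' : S1 ≤ t₁ := by
    calc S1 ≤ ∑ s ∈ Finset.Icc 1 t₁, (1:ℝ) := Finset.sum_le_sum fun i _ => by
              split <;> norm_num
    _ = t₁ := by simp [Nat.card_Icc]
  have hd0 : 0 ≤ d := Finset.sum_nonneg fun i _ => by positivity
  have hd1 : d ≤ (t:ℝ) - t₁ := by
    calc d ≤ ∑ s ∈ Finset.Icc (t₁+1) t, (1:ℝ) := Finset.sum_le_sum fun i _ => by
              split <;> norm_num
    _ = (t:ℝ) - t₁ := by
          rw [Finset.sum_const, Nat.card_Icc]
          have h3 : t + 1 - (t₁ + 1) = t - t₁ := by omega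
          rw [h3, nsmul_eq_mul, mul_one, Nat.cast_sub h2]
  exact aux_real (by exact_mod_cast h1) (by exact_mod_cast h2) hS0 hS1' hd0 hd1


theorem stmt1 {A : Type*} [Fintype A] [DecidableEq A]
    (u : A → ℝ) (hu : ∀ x, 0 ≤ u x) (γ : ℝ) (hγ : 0 < γ ∧ γ ≤ 1)
    (a : ℕ → A) (t₁ t₂ : ℕ) (ht₁ : 1 ≤ t₁) (ht₂ : t₁ < t₂) :
    |blockW u γ a t₁ t₂ - blockU u γ a t₁ t₂| ≤
      2 * (((t₂ : ℝ) - t₁) / t₁) * γ * ∑ b : A, u b := by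
  obtain ⟨hγ0, hγ1⟩ := hγ
  have hn : (0:ℝ) < (t₂:ℝ) - t₁ := by
    have : (t₁:ℝ) < t₂ := by exact_mod_cast ht₂
    linarith
  have ht₁R : (0:ℝ) < t₁ := by exact_mod_cast ht₁
  have hU : blockU u γ a t₁ t₂
      = (∑ s ∈ Finset.Icc (t₁+1) t₂, (1 - γ * freq a (a s) t₁) * u (a s)) / ((t₂:ℝ) - t₁) := by
    unfold blockU blockP
    simp only [div_mul_eq_mul_div, mul_assoc, Finset.sum_mul]
    rw [← Finset.sum_div]
    congr 1
    rw [Finset.sum_comm]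
    apply Finset.sum_congr rfl
    intro s _
    simp [ite_mul, Finset.sum_ite_eq]
  have key : blockW u γ a t₁ t₂ - blockU u γ a t₁ t₂
      = (∑ s ∈ Finset.Icc (t₁+1) t₂,
          γ * (freq a (a s) t₁ - freq a (a s) (s-1)) * u (a s)) / ((t₂:ℝ) - t₁) := by
    rw [hU]
    unfold blockW
    rw [div_sub_div_same, ← Finset.sum_sub_distrib]
    congr 1
    apply Finset.sum_congr rfl
    intro s _
    ring
  rw [key, abs_div, abs_of_pos hn]
  rw [div_le_iff₀ hn]
  have hsum : |∑ s ∈ Finset.Icc (t₁+1) t₂,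
        γ * (freq a (a s) t₁ - freq a (a s) (s-1)) * u (a s)|
      ≤ ∑ s ∈ Finset.Icc (t₁+1) t₂, γ * (2 * (((t₂:ℝ) - t₁)) / t₁) * u (a s) := by
    refine (Finset.abs_sum_le_sum_abs _ _).trans (Finset.sum_le_sum ?_)
    intro s hs
    rw [Finset.mem_Icc] at hs
    rw [abs_mul, abs_mul, abs_of_pos hγ0, abs_of_nonneg (hu _)]
    refine mul_le_mul_of_nonneg_right (mul_le_mul_of_nonneg_left ?_ hγ0.le) (hu _)
    have h2 : t₁ ≤ s - 1 := by omega
    refine (freq_diff_abs a (a s) ht₁ h2).trans ?_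
    have hcast : ((s - 1 : ℕ) : ℝ) ≤ (t₂ : ℝ) := by
      exact_mod_cast Nat.le_trans (Nat.sub_le s 1) hs.2
    gcongr
  refine hsum.trans ?_
  rw [← Finset.mul_sum]
  have hsum2 : ∑ s ∈ Finset.Icc (t₁+1) t₂, u (a s) ≤ ((t₂:ℝ) - t₁) * ∑ b : A, u b := by
    have hle : ∀ s ∈ Finset.Icc (t₁+1) t₂, u (a s) ≤ ∑ b : A, u b := fun s _ =>
      Finset.single_le_sum (fun b _ => hu b) (Finset.mem_univ _)
    calc ∑ s ∈ Finset.Icc (t₁+1) t₂, u (a s) ≤ ∑ s ∈ Finset.Icc (t₁+1) t₂, ∑ b : A, u b :=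
          Finset.sum_le_sum hle
    _ = ((t₂:ℝ) - t₁) * ∑ b : A, u b := by
        rw [Finset.sum_const, Nat.card_Icc, nsmul_eq_mul]
        congr 1
        have h3 : t₂ + 1 - (t₁ + 1) = t₂ - t₁ := by omega
        rw [h3, Nat.cast_sub ht₂.le]
  have hsumnn : (0:ℝ) ≤ ∑ b : A, u b := Finset.sum_nonneg fun b _ => hu b
  calc γ * (2 * ((t₂:ℝ) - t₁) / t₁) * ∑ s ∈ Finset.Icc (t₁+1) t₂, u (a s)
      ≤ γ * (2 * ((t₂:ℝ) - t₁) / t₁) * (((t₂:ℝ) - t₁) * ∑ b : A, u b) := by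
        refine mul_le_mul_of_nonneg_left hsum2 ?_
        positivity
    _ = 2 * (((t₂ : ℝ) - t₁) / t₁) * γ * (∑ b : A, u b) * ((t₂:ℝ) - t₁) := by ring
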